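/- Let (N_m)_{m≥1} be a sequence of integers such that exp(∑ N_m T^m/m) = ∏_i (1-α_i T) / ∏_j (1-β_j T) is a rational function with nonzero algebraic numbers α_i, β_j, and suppose v(N_m) ≥ mρ for all m ≥ 1, where v is a valuation (e.g., ord_q) and ρ ∈ R. Then v(α_i) ≥ ρ and v(β_j) ≥ ρ for all i, j. -/

import Mathlib

section AxAux

variable {K : Type*} [Field K] (v : K → ℝ)
  (hm : ∀ x y : K, x ≠ 0 → y ≠ 0 → v (x * y) = v x + v y)
  (ha : ∀ x y : K, x ≠ 0 → y ≠ 0 → x + y ≠ 0 → min (v x) (v y) ≤ v (x + y))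

include hm

lemma ax_v_one : v 1 = 0 := by
  have := hm 1 1 one_ne_zero one_ne_zero
  simp only [mul_one] at this; linarith

lemma ax_v_neg (x : K) (hx : x ≠ 0) : v (-x) = v x := by
  have h1 : v ((-1 : K) * (-1)) = v (-1) + v (-1) := hm _ _ (by norm_num) (by norm_num)
  have h2 : v (1 : K) = 0 := ax_v_one v hm
  norm_num at h1
  have hneg1 : v (-1 : K) = 0 := by linarith
  have : v ((-1 : K) * x) = v (-1) + v x := hm _ _ (by norm_num) hx
  simpa [hneg1] using this

lemma ax_v_pow (x : K) (hx : x ≠ 0) (n : ℕ) : v (x ^ n) = n * v x := by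
  induction n with
  | zero => simpa using ax_v_one v hm
  | succ k ih =>
      rw [pow_succ, hm _ _ (pow_ne_zero _ hx) hx, ih]
      push_cast; ring

lemma ax_v_inv (x : K) (hx : x ≠ 0) : v x⁻¹ = -v x := by
  have := hm x x⁻¹ hx (inv_ne_zero hx)
  rw [mul_inv_cancel₀ hx, ax_v_one v hm] at this
  linarith

include ha

lemma ax_good_add (b : ℝ) (x y : K) (hx : x = 0 ∨ b ≤ v x) (hy : y = 0 ∨ b ≤ v y) :
    x + y = 0 ∨ b ≤ v (x + y) := by
  by_cases hx0 : x = 0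
  · simpa [hx0] using hy
  by_cases hy0 : y = 0
  · simpa [hy0] using hx
  replace hx : b ≤ v x := hx.resolve_left hx0
  replace hy : b ≤ v y := hy.resolve_left hy0
  by_cases hxy : x + y = 0
  · exact Or.inl hxy
  · exact Or.inr (le_trans (le_min hx hy) (ha x y hx0 hy0 hxy))

lemma ax_good_sum {ι : Type*} (s : Finset ι) (f : ι → K) (b : ℝ)
    (h : ∀ i ∈ s, f i = 0 ∨ b ≤ v (f i)) :
    (∑ i ∈ s, f i) = 0 ∨ b ≤ v (∑ i ∈ s, f i) := by
  classical
  induction s using Finset.cons_induction with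
  | empty => left; simp
  | cons a s has ih =>
      rw [Finset.sum_cons]
      exact ax_good_add v hm ha b _ _ (h a (Finset.mem_cons_self a s))
        (ih fun i hi => h i (Finset.mem_cons_of_mem hi))

def axSubring : Subring K where
  carrier := {x | x = 0 ∨ 0 ≤ v x}
  zero_mem' := Or.inl rfl
  one_mem' := Or.inr (le_of_eq (ax_v_one v hm).symm)
  add_mem' := fun {x y} hx hy => ax_good_add v hm ha 0 x y hx hy
  neg_mem' := fun {x} hx => by
    rcases hx with rfl | hx
    · exact Or.inl (by simp)
    · by_cases h0 : x = 0
      · exact Or.inl (by simp [h0])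
      · exact Or.inr (by rw [ax_v_neg v hm x h0]; exact hx)
  mul_mem' := fun {x y} hx hy => by
    rcases hx with rfl | hx
    · exact Or.inl (by simp)
    rcases hy with rfl | hy
    · exact Or.inl (by simp)
    by_cases h0 : x = 0
    · exact Or.inl (by simp [h0])
    by_cases h1 : y = 0
    · exact Or.inl (by simp [h1])
    · exact Or.inr (by rw [hm x y h0 h1]; positivity)

lemma ax_int_good (n : ℤ) : (n : K) = 0 ∨ 0 ≤ v (n : K) :=
  intCast_mem (axSubring v hm ha) n

omit ha

lemma ax_v_prod {ι : Type*} (s : Finset ι) (f : ι → K) (h : ∀ i ∈ s, f i ≠ 0) :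
    v (∏ i ∈ s, f i) = ∑ i ∈ s, v (f i) := by
  classical
  induction s using Finset.cons_induction with
  | empty => simpa using ax_v_one v hm
  | cons a s has ih =>
      rw [Finset.prod_cons, Finset.sum_cons,
        hm _ _ (h a (Finset.mem_cons_self a s)) (Finset.prod_ne_zero_iff.mpr
          fun i hi => h i (Finset.mem_cons_of_mem hi)),
        ih fun i hi => h i (Finset.mem_cons_of_mem hi)]

open Polynomial in
include ha in
lemma ax_coeff_good {ι : Type*} (s : Finset ι) (u : ι → K)
    (hu : ∀ i ∈ s, u i = 0 ∨ 0 ≤ v (u i)) (k : ℕ) :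
    (∏ i ∈ s, (X - C (u i))).coeff k = 0 ∨
      0 ≤ v ((∏ i ∈ s, (X - C (u i))).coeff k) := by
  classical
  set O := axSubring v hm ha with hO
  set P₀ : Polynomial O := ∏ i ∈ s.attach, (X - C (⟨u i, hu i i.2⟩ : O)) with hP₀
  have hmap : (P₀.map O.subtype) = ∏ i ∈ s, (X - C (u i)) := by
    rw [hP₀, Polynomial.map_prod, ← Finset.prod_attach s fun i => (X - C (u i))]
    refine Finset.prod_congr rfl fun i _ => ?_
    simp [Polynomial.map_sub]
  rw [← hmap, Polynomial.coeff_map]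
  exact (P₀.coeff k).2

end AxAux

set_option maxHeartbeats 1600000 in
/-- Ax's argument: let `α, β` be multisets of nonzero elements of a field
`K` (the reciprocal zeros and poles of a rational power series, written in reduced form so
that no `α` equals a `β`), let `v` be a valuation on `K` (written additively), and let
`N_m = ∑ β^m − ∑ α^m` be integers with `v(N_m) ≥ m·ρ` for all `m ≥ 1` (vacuous when
`N_m = 0`, as `v(0) = ∞`). Then `v(α_i) ≥ ρ` and `v(β_j) ≥ ρ` for all `i, j`. -/
theorem valuation_bound_of_power_sums (K : Type*) [Field K] [CharZero K]
    (v : K → ℝ)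
    (hv_mul : ∀ x y : K, x ≠ 0 → y ≠ 0 → v (x * y) = v x + v y)
    (hv_add : ∀ x y : K, x ≠ 0 → y ≠ 0 → x + y ≠ 0 → min (v x) (v y) ≤ v (x + y))
    (α β : Multiset K)
    (hα : ∀ x ∈ α, x ≠ 0) (hβ : ∀ x ∈ β, x ≠ 0)
    (hdisj : ∀ x ∈ α, x ∉ β)
    (ρ : ℝ) (N : ℕ → ℤ)
    (hN : ∀ m : ℕ, 1 ≤ m →
      (N m : K) = (β.map fun x => x ^ m).sum - (α.map fun x => x ^ m).sum)
    (hdiv : ∀ m : ℕ, 1 ≤ m → N m = 0 ∨ (m : ℝ) * ρ ≤ v ((N m : K))) :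
    (∀ x ∈ α, ρ ≤ v x) ∧ (∀ x ∈ β, ρ ≤ v x) := by
  classical
  set D : Finset K := (α + β).toFinset with hD
  have hDmem : ∀ y, y ∈ D ↔ (y ∈ α ∨ y ∈ β) := by
    intro y; simp [hD]
  have hD0 : ∀ y ∈ D, y ≠ 0 := fun y hy => ((hDmem y).1 hy).elim (hα y) (hβ y)
  set e : K → ℤ := fun y => (β.count y : ℤ) - (α.count y : ℤ) with he
  have hekey : ∀ m : ℕ, 1 ≤ m → (N m : K) = ∑ y ∈ D, (e y : K) * y ^ m := by
    intro m hm1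
    rw [hN m hm1]
    have hβs : (β.map fun x => x ^ m).sum = ∑ y ∈ D, β.count y • y ^ m := by
      rw [Finset.sum_multiset_map_count]
      exact Finset.sum_subset
        (fun y hy => (hDmem y).2 (Or.inr (Multiset.mem_toFinset.1 hy)))
        (fun y _ hy => by
          rw [Multiset.count_eq_zero_of_notMem
            (fun h => hy (Multiset.mem_toFinset.2 h)), zero_smul])
    have hαs : (α.map fun x => x ^ m).sum = ∑ y ∈ D, α.count y • y ^ m := by
      rw [Finset.sum_multiset_map_count]
      exact Finset.sum_subset
        (fun y hy => (hDmem y).2 (Or.inl (Multiset.mem_toFinset.1 hy)))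
        (fun y _ hy => by
          rw [Multiset.count_eq_zero_of_notMem
            (fun h => hy (Multiset.mem_toFinset.2 h)), zero_smul])
    rw [hβs, hαs, ← Finset.sum_sub_distrib]
    refine Finset.sum_congr rfl fun y _ => ?_
    simp only [he, nsmul_eq_mul]
    push_cast
    ring
  have hmain : ∀ x ∈ D, ρ ≤ v x := by
    intro x₀ hx₀
    by_contra hlt
    push_neg at hlt
    have hDne : D.Nonempty := ⟨x₀, hx₀⟩
    set c := D.inf' hDne v with hc
    have hcle : ∀ y ∈ D, c ≤ v y := fun y hy => Finset.inf'_le v hy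
    have hcρ : c < ρ := lt_of_le_of_lt (Finset.inf'_le v hx₀) hlt
    obtain ⟨x₁, hx₁D, hx₁v⟩ := Finset.exists_mem_eq_inf' hDne v
    have hx₁0 : x₁ ≠ 0 := hD0 _ hx₁D
    set S := D.filter (fun y => v y = c) with hS
    set T := D.filter (fun y => ¬ v y = c) with hT
    have hx₁S : x₁ ∈ S := Finset.mem_filter.2 ⟨hx₁D, hx₁v.symm⟩
    set E := insert ρ (T.image v) with hE
    have hEne : E.Nonempty := Finset.insert_nonempty _ _
    set ε := E.min' hEne - c with hεdef
    have hεpos : 0 < ε := by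
      have hmem := E.min'_mem hEne
      rcases Finset.mem_insert.1 hmem with h | h
      · rw [hεdef, h]; linarith
      · obtain ⟨y, hyT, hyv⟩ := Finset.mem_image.1 h
        obtain ⟨hyD, hne⟩ := Finset.mem_filter.1 hyT
        have h1 : c < v y := lt_of_le_of_ne (hcle y hyD) (Ne.symm hne)
        rw [hεdef, ← hyv]; linarith
    have hρb : ε ≤ ρ - c := by
      have := Finset.min'_le E ρ (Finset.mem_insert_self _ _)
      rw [hεdef]; linarith
    have hTb : ∀ y ∈ T, c + ε ≤ v y := by
      intro y hy
      have := Finset.min'_le E (v y)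
        (Finset.mem_insert_of_mem (Finset.mem_image_of_mem v hy))
      rw [hεdef]; linarith
    have heK : ∀ y ∈ D, (e y : K) ≠ 0 := by
      intro y hy
      have hez : e y ≠ 0 := by
        rcases (hDmem y).1 hy with h | h
        · have hβ0 : β.count y = 0 := Multiset.count_eq_zero_of_notMem (hdisj y h)
          have hα1 : 0 < α.count y := Multiset.count_pos.2 h
          simp only [he, hβ0]; omega
        · have hα0 : α.count y = 0 :=
            Multiset.count_eq_zero_of_notMem (fun h' => hdisj y h' h)
          have hβ1 : 0 < β.count y := Multiset.count_pos.2 h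
          simp only [he, hα0]; omega
      exact_mod_cast hez
    have hvdiv : ∀ y ∈ D, v (y / x₁) = v y - c := by
      intro y hy
      rw [div_eq_mul_inv, hv_mul y x₁⁻¹ (hD0 y hy) (inv_ne_zero hx₁0),
        ax_v_inv v hv_mul x₁ hx₁0, ← hx₁v]
      ring
    have hu0 : ∀ y ∈ D, y / x₁ ≠ 0 := fun y hy => div_ne_zero (hD0 y hy) hx₁0
    set n := S.card with hn
    set s : ℕ → K := fun m => ∑ y ∈ S, (e y : K) * (y / x₁) ^ m with hsdef
    have hSD : ∀ y ∈ S, y ∈ D := fun y hy => (Finset.mem_filter.1 hy).1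
    have hTD : ∀ y ∈ T, y ∈ D := fun y hy => (Finset.mem_filter.1 hy).1
    have hvS : ∀ y ∈ S, v (y / x₁) = 0 := by
      intro y hy
      rw [hvdiv y (hSD y hy), (Finset.mem_filter.1 hy).2]
      ring
    -- base case bound
    have hbase : ∀ m : ℕ, 1 ≤ m → s m = 0 ∨ (m : ℝ) * ε ≤ v (s m) := by
      intro m hm1
      have hsplit : s m = (N m : K) / x₁ ^ m +
          ∑ y ∈ T, -((e y : K) * (y / x₁) ^ m) := by
        rw [hekey m hm1, Finset.sum_div]
        have hDsum : ∑ y ∈ D, (e y : K) * y ^ m / x₁ ^ m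
            = s m + ∑ y ∈ T, (e y : K) * (y / x₁) ^ m := by
          rw [hsdef]
          rw [← Finset.sum_filter_add_sum_filter_not D (fun y => v y = c)
            (fun y => (e y : K) * y ^ m / x₁ ^ m)]
          congr 1 <;> refine Finset.sum_congr rfl fun y _ => by rw [div_pow]; ring
        rw [hDsum, Finset.sum_neg_distrib]
        ring
      rw [hsplit]
      refine ax_good_add v hv_mul hv_add _ _ _ ?_ ?_
      · by_cases hN0 : N m = 0
        · left; rw [hN0]; simp
        · right
          have h := (hdiv m hm1).resolve_left hN0
          have hNne : (N m : K) ≠ 0 := Int.cast_ne_zero.2 hN0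
          rw [div_eq_mul_inv, hv_mul _ _ hNne (inv_ne_zero (pow_ne_zero _ hx₁0)),
            ax_v_inv v hv_mul _ (pow_ne_zero _ hx₁0), ax_v_pow v hv_mul _ hx₁0, ← hx₁v,
            ← hc]
          nlinarith [(Nat.cast_nonneg m : (0:ℝ) ≤ (m:ℝ))]
      · refine ax_good_sum v hv_mul hv_add _ _ _ fun y hy => ?_
        right
        have hyD := hTD y hy
        rw [ax_v_neg v hv_mul _ (mul_ne_zero (heK y hyD) (pow_ne_zero _ (hu0 y hyD))),
          hv_mul _ _ (heK y hyD) (pow_ne_zero _ (hu0 y hyD)),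
          ax_v_pow v hv_mul _ (hu0 y hyD), hvdiv y hyD]
        have h1 : 0 ≤ v ((e y : K)) :=
          (ax_int_good v hv_mul hv_add (e y)).resolve_left (heK y hyD)
        have h2 : ε ≤ v y - c := by have := hTb y hy; linarith
        nlinarith [Nat.one_le_cast (α := ℝ) |>.2 hm1]
    -- characteristic polynomial of the minimal-valuation part
    set P : Polynomial K := ∏ y ∈ S, (Polynomial.X - Polynomial.C (y / x₁)) with hP
    have hdeg : P.natDegree = n := by
      rw [hP, Polynomial.natDegree_prod _ _ (fun y _ => Polynomial.X_sub_C_ne_zero _)]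
      simp [Polynomial.natDegree_X_sub_C, hn]
    have heval0 : ∀ y ∈ S, P.eval (y / x₁) = 0 := by
      intro y hy
      rw [hP, Polynomial.eval_prod]
      exact Finset.prod_eq_zero hy (by simp)
    have hrec : ∀ m : ℕ, ∑ k ∈ Finset.range (n + 1), P.coeff k * s (m + k) = 0 := by
      intro m
      have hterm : ∀ k, P.coeff k * s (m + k)
          = ∑ y ∈ S, (e y : K) * (y / x₁) ^ m * (P.coeff k * (y / x₁) ^ k) := by
        intro k
        rw [hsdef, Finset.mul_sum]
        refine Finset.sum_congr rfl fun y _ => ?_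
        rw [pow_add]; ring
      calc ∑ k ∈ Finset.range (n + 1), P.coeff k * s (m + k)
          = ∑ k ∈ Finset.range (n + 1), ∑ y ∈ S,
              (e y : K) * (y / x₁) ^ m * (P.coeff k * (y / x₁) ^ k) :=
            Finset.sum_congr rfl fun k _ => hterm k
        _ = ∑ y ∈ S, ∑ k ∈ Finset.range (n + 1),
              (e y : K) * (y / x₁) ^ m * (P.coeff k * (y / x₁) ^ k) := Finset.sum_comm
        _ = ∑ y ∈ S, (e y : K) * (y / x₁) ^ m * P.eval (y / x₁) := by
            refine Finset.sum_congr rfl fun y _ => ?_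
            rw [Polynomial.eval_eq_sum_range, hdeg, Finset.mul_sum]
        _ = 0 := Finset.sum_eq_zero fun y hy => by rw [heval0 y hy, mul_zero]
    have hprodeq : P.eval 0 = ∏ y ∈ S, -(y / x₁) := by
      rw [hP, Polynomial.eval_prod]
      exact Finset.prod_congr rfl fun y hy => by simp
    have hc0ne : P.coeff 0 ≠ 0 := by
      rw [Polynomial.coeff_zero_eq_eval_zero, hprodeq]
      exact Finset.prod_ne_zero_iff.2 fun y hy => neg_ne_zero.2 (hu0 y (hSD y hy))
    have hc0v : v (P.coeff 0) = 0 := by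
      rw [Polynomial.coeff_zero_eq_eval_zero, hprodeq,
        ax_v_prod v hv_mul _ _ (fun y hy => neg_ne_zero.2 (hu0 y (hSD y hy)))]
      exact Finset.sum_eq_zero fun y hy => by
        rw [ax_v_neg v hv_mul _ (hu0 y (hSD y hy)), hvS y hy]
    have hcoeffO : ∀ k, P.coeff k = 0 ∨ 0 ≤ v (P.coeff k) := by
      intro k
      rw [hP]
      exact ax_coeff_good v hv_mul hv_add S _
        (fun y hy => Or.inr (le_of_eq (hvS y hy).symm)) k
    -- the bootstrapping induction
    have hstep : ∀ k : ℕ, ∀ m : ℕ, 1 ≤ m →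
        s m = 0 ∨ ((m : ℝ) + k) * ε ≤ v (s m) := by
      intro k
      induction k with
      | zero => intro m hm1; simpa using hbase m hm1
      | succ k ih =>
          intro m hm1
          by_cases h0 : s m = 0
          · exact Or.inl h0
          right
          have hrecm := hrec m
          rw [Finset.sum_range_succ'] at hrecm
          have hRval : ∑ i ∈ Finset.range n, P.coeff (i + 1) * s (m + i + 1)
              = -(P.coeff 0 * s m) := by
            have h1 : ∑ i ∈ Finset.range n, P.coeff (i + 1) * s (m + (i + 1))
                = -(P.coeff 0 * s (m + 0)) := eq_neg_of_add_eq_zero_left hrecm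
            simpa [Nat.add_assoc] using h1
          have hRne : (∑ i ∈ Finset.range n, P.coeff (i + 1) * s (m + i + 1)) ≠ 0 := by
            rw [hRval]; exact neg_ne_zero.2 (mul_ne_zero hc0ne h0)
          have hgood := ax_good_sum v hv_mul hv_add (Finset.range n)
            (fun i => P.coeff (i + 1) * s (m + i + 1)) (((m : ℝ) + (k + 1)) * ε) ?_
          · have hvR := hgood.resolve_left hRne
            have hveq : v (s m)
                = v (∑ i ∈ Finset.range n, P.coeff (i + 1) * s (m + i + 1)) := by
              rw [hRval, ax_v_neg v hv_mul _ (mul_ne_zero hc0ne h0),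
                hv_mul _ _ hc0ne h0, hc0v, zero_add]
            rw [hveq]
            refine le_trans (le_of_eq ?_) hvR
            push_cast; ring
          · intro i _
            by_cases hcz : P.coeff (i + 1) = 0
            · left; rw [hcz, zero_mul]
            by_cases hsz : s (m + i + 1) = 0
            · left; rw [hsz, mul_zero]
            right
            have hcO := (hcoeffO (i + 1)).resolve_left hcz
            have hsO := (ih (m + i + 1) (by omega)).resolve_left hsz
            rw [hv_mul _ _ hcz hsz]
            have hle : ((m : ℝ) + (k + 1)) * ε ≤ (((m + i + 1 : ℕ) : ℝ) + k) * ε := by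
              refine mul_le_mul_of_nonneg_right ?_ hεpos.le
              push_cast
              have : (0:ℝ) ≤ (i:ℝ) := Nat.cast_nonneg i
              linarith
            linarith
    have hs0 : ∀ m : ℕ, 1 ≤ m → s m = 0 := by
      intro m hm1
      by_contra h0
      obtain ⟨k, hk⟩ := exists_nat_gt (v (s m) / ε)
      have hb := (hstep k m hm1).resolve_left h0
      have h1 : v (s m) < (k : ℝ) * ε := (div_lt_iff₀ hεpos).1 hk
      nlinarith [(Nat.cast_nonneg m : (0:ℝ) ≤ (m:ℝ)), hεpos.le]
    -- Vandermonde argument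
    set σ := S.equivFin.symm with hσ
    set g : Fin n → K := fun j => ((σ j : K)) / x₁ with hg
    have hginj : Function.Injective g := by
      intro i j hij
      apply S.equivFin.symm.injective
      refine Subtype.ext ?_
      have h2 := congrArg (· * x₁) hij
      simpa [hg, div_mul_cancel₀, hx₁0] using h2
    have hdet : ((Matrix.vandermonde g).transpose).det ≠ 0 := by
      rw [Matrix.det_transpose]
      exact Matrix.det_vandermonde_ne_zero_iff.2 hginj
    have hmv : ((Matrix.vandermonde g).transpose).mulVec (fun j => (e (σ j) : K) * g j) = 0 := by
      funext i
      have hval : ((Matrix.vandermonde g).transpose).mulVec (fun j => (e (σ j) : K) * g j) i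
          = s ((i : ℕ) + 1) := by
        calc ((Matrix.vandermonde g).transpose).mulVec (fun j => (e (σ j) : K) * g j) i
            = ∑ j : Fin n, g j ^ (i : ℕ) * ((e (σ j) : K) * g j) := by
              simp [Matrix.mulVec, dotProduct, Matrix.transpose_apply,
                Matrix.vandermonde_apply]
          _ = ∑ j : Fin n, ((fun y : {y // y ∈ S} =>
                ((e (y : K) : ℤ) : K) * ((y : K) / x₁) ^ ((i : ℕ) + 1)) (σ j)) := by
              refine Finset.sum_congr rfl fun j _ => ?_
              simp only [hg, pow_succ]
              ring
          _ = ∑ y : {y // y ∈ S}, ((e (y : K) : ℤ) : K) * ((y : K) / x₁) ^ ((i : ℕ) + 1) :=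
              Equiv.sum_comp σ (fun y : {y // y ∈ S} =>
                ((e (y : K) : ℤ) : K) * ((y : K) / x₁) ^ ((i : ℕ) + 1))
          _ = ∑ y ∈ S, (e y : K) * (y / x₁) ^ ((i : ℕ) + 1) :=
              Finset.sum_coe_sort S (fun y => (e y : K) * (y / x₁) ^ ((i : ℕ) + 1))
          _ = s ((i : ℕ) + 1) := by rw [hsdef]
      rw [hval, hs0 _ (Nat.le_add_left 1 _)]
      simp
    have hw := Matrix.eq_zero_of_mulVec_eq_zero hdet hmv
    have hx : (e x₁ : K) * (x₁ / x₁) = 0 := by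
      have h3 := congrFun hw (S.equivFin ⟨x₁, hx₁S⟩)
      simpa [hg, hσ, Equiv.symm_apply_apply] using h3
    rw [div_self hx₁0, mul_one] at hx
    exact heK x₁ hx₁D hx
  exact ⟨fun x hx => hmain x ((hDmem x).2 (Or.inl hx)),
    fun x hx => hmain x ((hDmem x).2 (Or.inr hx))⟩
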